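/- Let R be a commutative local ring, J₁, J₂ ⊆ R ideals and I = J₁ + J₂. For every n ≥ 1, J₁ ∩ Iⁿ = J₁·Iⁿ⁻¹ + (J₁ ∩ J₂ⁿ). Consequently, J₁ ⊆ I is Aluffi torsion-free if and only if J₁ ∩ J₂ⁿ ⊆ J₁·Iⁿ⁻¹ for all n ≥ 1. -/

import Mathlib

lemma pow_decomp {R : Type*} [CommRing R] (J₁ J₂ : Ideal R) :
    ∀ k : ℕ, (J₁ ⊔ J₂) ^ (k + 1) = J₁ * (J₁ ⊔ J₂) ^ k ⊔ J₂ ^ (k + 1) := by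
  intro k
  induction k with
  | zero => simp
  | succ k ih =>
    have expand : (J₁ ⊔ J₂) ^ (k + 2)
        = J₁ * (J₁ ⊔ J₂) ^ (k + 1) ⊔ (J₁ ⊔ J₂) * J₂ ^ (k + 1) := by
      rw [pow_succ' (J₁ ⊔ J₂) (k + 1)]
      conv_lhs => rw [ih]
      rw [Ideal.mul_sup, mul_left_comm, ← pow_succ']
    apply le_antisymm
    · rw [expand]
      apply sup_le le_sup_left
      rw [Ideal.sup_mul, ← pow_succ']
      exact sup_le
        (le_trans (Ideal.mul_mono_right (pow_le_pow_left' le_sup_right _)) le_sup_left)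
        le_sup_right
    · apply sup_le
      · rw [pow_succ' (J₁ ⊔ J₂) (k + 1)]
        exact Ideal.mul_mono le_sup_left le_rfl
      · exact pow_le_pow_left' le_sup_right _

theorem local_sum_decomposition {R : Type*} [CommRing R] [IsLocalRing R]
    (J₁ J₂ : Ideal R) (I : Ideal R) (hI : I = J₁ + J₂) :
    (∀ n : ℕ, 1 ≤ n → J₁ ⊓ I ^ n = J₁ * I ^ (n - 1) + (J₁ ⊓ J₂ ^ n)) ∧
      ((∀ n : ℕ, 1 ≤ n → J₁ ⊓ I ^ n = J₁ * I ^ (n - 1)) ↔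
        (∀ n : ℕ, 1 ≤ n → J₁ ⊓ J₂ ^ n ≤ J₁ * I ^ (n - 1))) := by
  have hI' : I = J₁ ⊔ J₂ := by rw [hI, Ideal.add_eq_sup]
  subst hI'
  simp only [Ideal.add_eq_sup]
  have key : ∀ n : ℕ, 1 ≤ n →
      J₁ ⊓ (J₁ ⊔ J₂) ^ n = J₁ * (J₁ ⊔ J₂) ^ (n - 1) ⊔ (J₁ ⊓ J₂ ^ n) := by
    intro n hn
    obtain ⟨k, rfl⟩ := Nat.exists_eq_add_of_le hn
    simp only [Nat.add_sub_cancel_left] at *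
    rw [add_comm 1 k, pow_decomp J₁ J₂ k]
    have hle : J₁ * (J₁ ⊔ J₂) ^ k ≤ J₁ := Ideal.mul_le_inf.trans inf_le_left
    calc J₁ ⊓ (J₁ * (J₁ ⊔ J₂) ^ k ⊔ J₂ ^ (k + 1))
        = J₁ ⊓ (J₂ ^ (k + 1) ⊔ J₁ * (J₁ ⊔ J₂) ^ k) := by rw [sup_comm]
      _ = J₁ ⊓ J₂ ^ (k + 1) ⊔ J₁ * (J₁ ⊔ J₂) ^ k := (inf_sup_assoc_of_le _ hle).symm
      _ = J₁ * (J₁ ⊔ J₂) ^ k ⊔ (J₁ ⊓ J₂ ^ (k + 1)) := sup_comm _ _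
  refine ⟨key, ?_⟩
  constructor
  · intro h n hn
    calc J₁ ⊓ J₂ ^ n ≤ J₁ ⊓ (J₁ ⊔ J₂) ^ n :=
          inf_le_inf_left _ (pow_le_pow_left' le_sup_right _)
      _ = _ := h n hn
  · intro h n hn
    rw [key n hn]
    exact sup_eq_left.mpr (h n hn)
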